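/- arXiv:2604.19950 — 2 statements merged into one kernel-verified Lean document; each statement's English description precedes it below -/
import Mathlib

section
/- Let a, b be real numbers with 0 < a, 0 < b < 1, and a² ≤ 4b (so 1 + az + bz² has a conjugate pair of roots). If a(b+1)/(4b) < 1, then min_{|z| ≤ 1} |1 + a z + b z²| = (1 - b)·√(1 - a²/(4b)). -/
set_option maxHeartbeats 1000000 in
theorem key_ineq_stmt9 (a b x y : ℝ) (ha : 0 < a) (hb0 : 0 < b) (hb1 : b < 1)
    (hab : a^2 ≤ 4*b) (hz : x^2 + y^2 ≤ 1) :
    (1-b)^2 * (4*b - a^2) ≤ 4*b*((1 + a*x + b*(x^2 - y^2))^2 + (a*y + 2*b*x*y)^2) := by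
  obtain ⟨M, hM⟩ : ∃ M:ℝ, M = a^2 + 2*a*b*x - 2*b*(1-b) := ⟨_, rfl⟩
  obtain ⟨t, htd⟩ : ∃ t:ℝ, t = 1 - x^2 - y^2 := ⟨_, rfl⟩
  obtain ⟨P, hP⟩ : ∃ P:ℝ, P = 4*b*x + a*(1+b) := ⟨_, rfl⟩
  have ht : 0 ≤ t := by rw [htd]; linarith
  have hid : 4*b*((1 + a*x + b*(x^2 - y^2))^2 + (a*y + 2*b*x*y)^2) - (1-b)^2*(4*b - a^2)
      = P^2 - 4*b*t*M + 4*b^3*t^2 := by rw [hM, htd, hP]; ring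
  suffices h : 0 ≤ P^2 - 4*b*t*M + 4*b^3*t^2 by linarith
  rcases le_or_gt M 0 with hM0 | hM0
  · nlinarith [sq_nonneg P, mul_nonneg (mul_nonneg hb0.le ht) (neg_nonneg.2 hM0),
      mul_nonneg (mul_nonneg hb0.le (mul_nonneg hb0.le hb0.le)) (sq_nonneg t)]
  · have h1 : 2*b*(1-b) < a*(a + 2*b*x) := by rw [hM] at hM0; nlinarith
    have hq : (2*b*(1-b))*(2*b*(1-b)) < (a*(a + 2*b*x))*(a*(a + 2*b*x)) :=
      mul_self_lt_mul_self (by nlinarith) h1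
    have h2 : b*(1-b)^2 ≤ (a + 2*b*x)^2 := by
      nlinarith [hq, mul_pos ha ha, hab, mul_nonneg hb0.le (sq_nonneg (1-b))]
    have hD : M^2 ≤ b*P^2 := by
      have hfac : b*P^2 - M^2 = (4*b - a^2)*((2*b*x + a)^2 - b*(1-b)^2) := by
        rw [hM, hP]; ring
      nlinarith [mul_nonneg (by linarith : (0:ℝ) ≤ 4*b - a^2)
        (by nlinarith : (0:ℝ) ≤ (2*b*x + a)^2 - b*(1-b)^2)]
    have hb2 : 0 ≤ b*(P^2 - 4*b*t*M + 4*b^3*t^2) := by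
      nlinarith [sq_nonneg (2*b^2*t - M), hD]
    nlinarith [hb2, hb0]

theorem stmt_9 (a b : ℝ) (ha : 0 < a) (hb0 : 0 < b) (hb1 : b < 1)
    (hab : a ^ 2 ≤ 4 * b) (hcrit : a * (b + 1) / (4 * b) < 1) :
    IsLeast ((fun z : ℂ => ‖1 + (a : ℂ) * z + (b : ℂ) * z ^ 2‖) '' {z : ℂ | ‖z‖ ≤ 1})
      ((1 - b) * Real.sqrt (1 - a ^ 2 / (4 * b))) := by
  have hb4 : (0:ℝ) < 4*b := by linarith
  have h1a : 0 ≤ 1 - a^2/(4*b) := by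
    rw [sub_nonneg, div_le_one hb4]; exact hab
  have hb1' : (0:ℝ) ≤ 1 - b := by linarith
  have hnorm : ∀ x y : ℝ, Complex.normSq (1 + (a:ℂ)*(⟨x, y⟩:ℂ) + (b:ℂ)*(⟨x, y⟩:ℂ)^2)
      = (1 + a*x + b*(x^2 - y^2))^2 + (a*y + 2*b*x*y)^2 := by
    intro x y
    simp [Complex.normSq_apply, Complex.add_re, Complex.add_im, Complex.mul_re, Complex.mul_im,
      pow_two]
    ring
  constructor
  · -- membership : witness on the unit circle
    set x0 : ℝ := -(a*(b+1)/(4*b)) with hx0def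
    have hx01 : -1 < x0 := by rw [hx0def]; linarith [hcrit]
    have hx02 : x0 < 0 := by rw [hx0def]; exact neg_lt_zero.mpr (by positivity)
    have hx0sq : x0^2 < 1 := by nlinarith
    set y0 : ℝ := Real.sqrt (1 - x0^2) with hy0def
    have hy0 : y0^2 = 1 - x0^2 := Real.sq_sqrt (by linarith)
    refine ⟨⟨x0, y0⟩, ?_, ?_⟩
    · show ‖(⟨x0, y0⟩ : ℂ)‖ ≤ 1
      have : ‖(⟨x0, y0⟩ : ℂ)‖ = Real.sqrt (x0^2 + y0^2) := by
        rw [Complex.norm_def, Complex.normSq_mk]; ring_nf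
      rw [this, hy0, show x0^2 + (1 - x0^2) = 1 by ring, Real.sqrt_one]
    · show ‖1 + (a:ℂ)*(⟨x0, y0⟩:ℂ) + (b:ℂ)*(⟨x0, y0⟩:ℂ)^2‖ = (1-b)*Real.sqrt (1 - a^2/(4*b))
      have hns : Complex.normSq (1 + (a:ℂ)*(⟨x0, y0⟩:ℂ) + (b:ℂ)*(⟨x0, y0⟩:ℂ)^2)
          = (1-b)^2 * (1 - a^2/(4*b)) := by
        rw [hnorm x0 y0]
        have e1 : (a*y0 + 2*b*x0*y0)^2 = (1 - x0^2)*(a + 2*b*x0)^2 := by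
          rw [← hy0]; ring
        have e2 : (1 + a*x0 + b*(x0^2 - y0^2))^2 = (1 + a*x0 + b*(2*x0^2 - 1))^2 := by
          rw [hy0]; ring
        rw [e1, e2, hx0def]
        field_simp
        ring
      rw [Complex.norm_def, hns, Real.sqrt_mul (sq_nonneg (1-b)),
        Real.sqrt_sq hb1']
  · -- lower bound
    rintro v ⟨z, hz, rfl⟩
    simp only [Set.mem_setOf_eq] at hz
    have hx : z.re^2 + z.im^2 ≤ 1 := by
      have h2 := Complex.sq_norm z
      rw [Complex.normSq_apply] at h2
      nlinarith [norm_nonneg z]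
    have hkey := key_ineq_stmt9 a b z.re z.im ha hb0 hb1 (by linarith) hx
    have hzeq : (⟨z.re, z.im⟩ : ℂ) = z := by exact Complex.ext rfl rfl
    have hns : ‖1 + (a:ℂ)*z + (b:ℂ)*z^2‖^2
        = (1 + a*z.re + b*(z.re^2 - z.im^2))^2 + (a*z.im + 2*b*z.re*z.im)^2 := by
      rw [Complex.sq_norm, ← hzeq, hnorm]
    have hval : ((1-b)*Real.sqrt (1 - a^2/(4*b)))^2 = (1-b)^2*(1 - a^2/(4*b)) := by
      rw [mul_pow, Real.sq_sqrt h1a]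
    have hdiv : (1-b)^2*(1 - a^2/(4*b)) * (4*b) = (1-b)^2*(4*b - a^2) := by
      field_simp
    have hle : ((1-b)*Real.sqrt (1 - a^2/(4*b)))^2 ≤ ‖1 + (a:ℂ)*z + (b:ℂ)*z^2‖^2 := by
      rw [hval, hns]; nlinarith [hkey, hb4]
    calc (1-b)*Real.sqrt (1 - a^2/(4*b))
        = Real.sqrt (((1-b)*Real.sqrt (1 - a^2/(4*b)))^2) :=
          (Real.sqrt_sq (mul_nonneg hb1' (Real.sqrt_nonneg _))).symm
      _ ≤ Real.sqrt (‖1 + (a:ℂ)*z + (b:ℂ)*z^2‖^2) := Real.sqrt_le_sqrt hle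
      _ = ‖1 + (a:ℂ)*z + (b:ℂ)*z^2‖ := Real.sqrt_sq (norm_nonneg _)
end

section
/- Let a, b be nonnegative real numbers with b < 1 and a(b+1)/(4b) ≥ 1 (with b > 0) such that 1 - a + b > 0. Then min_{|z| ≤ 1} |1 + a z + b z²| = 1 - a + b. -/
set_option maxHeartbeats 1000000

lemma L1 (a b : ℝ) (ha : 0 ≤ a) (hb0 : 0 < b) (hb1 : b < 1) (hp : a < 1+b) :
    0 ≤ a^2 - 6*a*b + 6*b + 2*b^2 := by
  rcases le_or_gt b (1/2) with h | h
  · nlinarith [sq_nonneg (a-3*b), mul_nonneg hb0.le (by linarith : (0:ℝ) ≤ 6-7*b)]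
  · nlinarith [mul_pos (sub_pos.2 hp) (by linarith : (0:ℝ) < 5*b-1-a), mul_pos (sub_pos.2 hb1) (by linarith : (0:ℝ) < 1+3*b)]

lemma L2 (a b : ℝ) (ha : 0 ≤ a) (hb0 : 0 < b) (hb1 : b < 1)
    (hc : 4*b ≤ a*(1+b)) (hp : a < 1+b) :
    a^2 - 4*a*b - 2*a + 6*b + 2*b^2 ≤ 0 := by
  nlinarith [mul_nonneg (sub_nonneg.2 hc) (sub_pos.2 hp).le, mul_nonneg (mul_nonneg hb0.le (sub_pos.2 hb1).le) (sq_nonneg (1-b)), mul_nonneg (sub_nonneg.2 hc) (mul_nonneg hb0.le hb0.le), mul_pos hb0 hb0, sq_nonneg (1-b), mul_nonneg (sub_nonneg.2 hc) hb0.le]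

lemma lemT (a b x : ℝ) (ha : 0 ≤ a) (hb0 : 0 < b) (hb1 : b < 1)
    (hc : 4*b ≤ a*(1+b)) (hp : a < 1+b) (hx1 : -1 ≤ x) (hx2 : x ≤ 1) :
    (1-x)*((a^2+2*a*b*x-2*b+2*b^2)+8*b) ≤ 4*a*(1+b) := by
  have h1 := L1 a b ha hb0 hb1 hp
  have h2 := L2 a b ha hb0 hb1 hc hp
  nlinarith [mul_nonneg (by linarith : (0:ℝ) ≤ x+1) h1, mul_nonneg (sq_nonneg (x+1)) (mul_nonneg ha hb0.le)]


lemma key (a b x y : ℝ) (ha : 0 ≤ a) (hb0 : 0 < b) (hb1 : b < 1)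
    (hc : 4*b ≤ a*(1+b)) (hp : a < 1+b) (hxy : x^2+y^2 ≤ 1) :
    (1-a+b)^2 ≤ (1+a*x+b*(x^2-y^2))^2 + (a*y+2*b*x*y)^2 := by
  have hx1 : -1 ≤ x := by nlinarith [sq_nonneg y, sq_nonneg (x+1)]
  have hx2 : x ≤ 1 := by nlinarith [sq_nonneg y, sq_nonneg (x-1)]
  set C : ℝ := 2*b-2*b^2-a^2-2*a*b*x with hCdef
  set u : ℝ := 1-x^2-y^2 with hudef
  have hu : 0 ≤ u := by simp only [hudef]; linarith
  have huU : u ≤ 1-x^2 := by nlinarith [sq_nonneg y]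
  have hA : 0 ≤ 2*(x+1)*(2*b*(x-1)+a*(1+b)) := by
    apply mul_nonneg (by linarith)
    nlinarith [mul_nonneg hb0.le (by linarith : (0:ℝ) ≤ x+1)]
  have hid : (1+a*x+b*(x^2-y^2))^2 + (a*y+2*b*x*y)^2 - (1-a+b)^2
      = 2*(x+1)*(2*b*(x-1)+a*(1+b)) + u*C + b^2*u^2 := by
    simp only [hCdef, hudef]; ring
  have hmain : 0 ≤ 2*(x+1)*(2*b*(x-1)+a*(1+b)) + u*C + b^2*u^2 := by
    rcases le_or_gt 0 (C + b^2*u) with h | h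
    · nlinarith [mul_nonneg hu h]
    · rcases le_or_gt (-C) (2*b^2*(1-x^2)) with hV | hV
      · have hD : 0 ≤ -C := by nlinarith [mul_nonneg (mul_nonneg hb0.le hb0.le) hu]
        have hT := lemT a b x ha hb0 hb1 hc hp hx1 hx2
        have hCsq : C^2 ≤ 4*b^2*(2*(x+1)*(2*b*(x-1)+a*(1+b))) := by
          have h1 : C^2 ≤ (2*b^2*(1-x^2))*(-C) := by nlinarith [mul_le_mul_of_nonneg_right hV hD]
          have h2 : (1-x)*(-C) ≤ 4*(a*(1+b)-2*b*(1-x)) := by simp only [hCdef]; nlinarith [hT]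
          calc C^2 ≤ (2*b^2*(1-x^2))*(-C) := h1
            _ = (2*b^2*(1+x))*((1-x)*(-C)) := by ring
            _ ≤ (2*b^2*(1+x))*(4*(a*(1+b)-2*b*(1-x))) := by
                apply mul_le_mul_of_nonneg_left h2
                exact mul_nonneg (by nlinarith) (by linarith)
            _ = 4*b^2*(2*(x+1)*(2*b*(x-1)+a*(1+b))) := by ring
        have hb4 : (0:ℝ) < 4*b^2 := by positivity
        have h9 : 0 ≤ (4*b^2)*(2*(x+1)*(2*b*(x-1)+a*(1+b)) + u*C + b^2*u^2) := by
          nlinarith [sq_nonneg (C + 2*b^2*u)]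
        exact nonneg_of_mul_nonneg_right h9 hb4
      · have ha2b : 2*b ≤ a := by nlinarith
        have h5 : 0 ≤ (x+1)*(a+b*(x-1)) := by
          apply mul_nonneg (by linarith)
          nlinarith [mul_nonneg hb0.le (by linarith : (0:ℝ) ≤ x+1)]
        have e1 : 1-a+b ≤ 1+a*x+b*x^2 := by nlinarith [h5]
        have e2 : (1-a+b)^2 ≤ (1+a*x+b*x^2)^2 := by
          apply pow_le_pow_left₀ (by linarith) e1
        have hqU : 0 ≤ 2*(x+1)*(2*b*(x-1)+a*(1+b)) + (1-x^2)*C + b^2*(1-x^2)^2 := by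
          have hidU : 2*(x+1)*(2*b*(x-1)+a*(1+b)) + (1-x^2)*C + b^2*(1-x^2)^2
              = (1+a*x+b*x^2)^2 - (1-a+b)^2 := by simp only [hCdef]; ring
          linarith
        have hfac : 0 ≤ (u-(1-x^2))*(C+b^2*(u+(1-x^2))) := by
          have t1 : u-(1-x^2) ≤ 0 := by linarith
          have t2 : C+b^2*(u+(1-x^2)) ≤ 0 := by
            nlinarith [mul_nonneg (mul_nonneg hb0.le hb0.le) (by linarith : 0 ≤ (1-x^2) - u)]
          exact mul_nonneg_of_nonpos_of_nonpos t1 t2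
        have hdq : 2*(x+1)*(2*b*(x-1)+a*(1+b)) + u*C + b^2*u^2
            - (2*(x+1)*(2*b*(x-1)+a*(1+b)) + (1-x^2)*C + b^2*(1-x^2)^2)
            = (u-(1-x^2))*(C+b^2*(u+(1-x^2))) := by ring
        linarith
  linarith [hid, hmain]


theorem stmt_10 (a b : ℝ) (ha : 0 ≤ a) (hb0 : 0 < b) (hb1 : b < 1)
    (hcrit : 1 ≤ a * (b + 1) / (4 * b)) (hpos : 0 < 1 - a + b) :
    IsLeast ((fun z : ℂ => ‖1 + (a : ℂ) * z + (b : ℂ) * z ^ 2‖) '' {z : ℂ | ‖z‖ ≤ 1})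
      (1 - a + b) := by
  have hc : 4*b ≤ a*(1+b) := by
    rw [one_le_div (by positivity)] at hcrit; linarith
  have hp : a < 1+b := by linarith
  constructor
  · refine ⟨-1, by simp, ?_⟩
    have : (1 : ℂ) + (a:ℂ)*(-1) + (b:ℂ)*(-1)^2 = ((1-a+b : ℝ) : ℂ) := by push_cast; ring
    simp only [this, Complex.norm_real, Real.norm_eq_abs, abs_of_pos hpos]
  · rintro w ⟨z, hz, rfl⟩
    simp only [Set.mem_setOf_eq] at hz
    set x := z.re
    set y := z.im
    have hxy : x^2 + y^2 ≤ 1 := by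
      have h1 : ‖z‖^2 ≤ 1 := by nlinarith [norm_nonneg z]
      rwa [Complex.sq_norm, Complex.normSq_apply, ← pow_two, ← pow_two] at h1
    have hk := key a b x y ha hb0 hb1 hc hp hxy
    have hre : (1 + (a:ℂ)*z + (b:ℂ)*z^2).re = 1+a*x+b*(x^2-y^2) := by
      simp [Complex.add_re, Complex.mul_re, Complex.mul_im, pow_two]; rfl
    have him : (1 + (a:ℂ)*z + (b:ℂ)*z^2).im = a*y+2*b*x*y := by
      simp [Complex.add_im, Complex.mul_re, Complex.mul_im, pow_two]; ring
    have hnorm : ‖1 + (a:ℂ)*z + (b:ℂ)*z^2‖^2 = (1+a*x+b*(x^2-y^2))^2 + (a*y+2*b*x*y)^2 := by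
      rw [Complex.sq_norm, Complex.normSq_apply, hre, him]; ring
    have h2 : (1-a+b)^2 ≤ ‖1 + (a:ℂ)*z + (b:ℂ)*z^2‖^2 := by rw [hnorm]; exact hk
    nlinarith [norm_nonneg (1 + (a:ℂ)*z + (b:ℂ)*z^2), h2]
end
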